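/- Maximum spare time gained by using the avatar: assume 0 < γ ≤ 1/β, β > 0, Y ≥ 0, Z ≥ 0, and X̃' = X̃. Then the maximum, over all feasible pairs (x, y) of the simplified MUST-M problem, of the spare time X̃' − ∑_v (x_v + γ·y_v) exists, is attained, and equals (1/β − γ)·min(Y, Z/γ, β·X̃); in particular, the spare time gained is nonnegative and is zero when γ = 1/β. -/

import Mathlib

open Finset

/-- Feasibility for the simplified MUST-M problem. -/
def Feasible {V : Type*} [Fintype V] (xt : V → ℝ) (β γ X' Y Z : ℝ)
    (x y : V → ℝ) : Prop :=
  (∀ v, 0 ≤ x v) ∧ (∀ v, 0 ≤ y v) ∧ (∀ v, xt v ≤ x v + (1 / β) * y v) ∧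
  (∑ v, (x v + γ * y v)) ≤ X' ∧ (∑ v, y v) ≤ Y ∧ (∑ v, γ * y v) ≤ Z

/-- Maximum spare time gained by using the avatar in case A with
`X̃' = X̃`. -/
theorem mustm_max_spare_time {V : Type*} [Fintype V]
    (xt : V → ℝ) (β γ Y Z : ℝ)
    (hxt : ∀ v, 0 ≤ xt v) (hβ : 0 < β) (hγ : 0 < γ) (hγβ : γ ≤ 1 / β)
    (hY : 0 ≤ Y) (hZ : 0 ≤ Z) :
    IsGreatest
      {s : ℝ | ∃ x y : V → ℝ,
        Feasible xt β γ (∑ v, xt v) Y Z x y ∧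
          s = (∑ v, xt v) - ∑ v, (x v + γ * y v)}
      ((1 / β - γ) * min Y (min (Z / γ) (β * ∑ v, xt v))) ∧
    0 ≤ (1 / β - γ) * min Y (min (Z / γ) (β * ∑ v, xt v)) ∧
    (γ = 1 / β →
      (1 / β - γ) * min Y (min (Z / γ) (β * ∑ v, xt v)) = 0) := by
  set X : ℝ := ∑ v, xt v with hXdef
  have hX : 0 ≤ X := Finset.sum_nonneg fun v _ => hxt v
  set M : ℝ := min Y (min (Z / γ) (β * X)) with hMdef
  have hc : 0 ≤ 1 / β - γ := by linarith
  have hM0 : 0 ≤ M := le_min hY (le_min (div_nonneg hZ hγ.le)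
    (mul_nonneg hβ.le hX))
  have hMY : M ≤ Y := min_le_left _ _
  have hMZ : M ≤ Z / γ := le_trans (min_le_right _ _) (min_le_left _ _)
  have hMX : M ≤ β * X := le_trans (min_le_right _ _) (min_le_right _ _)
  have hβγ : γ * β ≤ 1 := by
    have h := mul_le_mul_of_nonneg_right hγβ hβ.le
    rwa [one_div, inv_mul_cancel₀ hβ.ne'] at h
  refine ⟨⟨?_, ?_⟩, mul_nonneg hc hM0, fun h => by rw [h]; ring⟩
  · -- membership
    by_cases hX0 : X = 0
    · have hxt0 : ∀ v, xt v = 0 := by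
        intro v
        have := Finset.sum_eq_zero_iff_of_nonneg (fun v _ => hxt v) |>.mp hX0
        exact this v (Finset.mem_univ v)
      have hM : M = 0 := by
        have : β * X = 0 := by rw [hX0]; ring
        rw [hMdef, this]
        have : min (Z / γ) 0 = 0 := min_eq_right (div_nonneg hZ hγ.le)
        rw [this]
        exact min_eq_right hY
      refine ⟨0, 0, ⟨fun v => le_refl 0, fun v => le_refl 0,
        fun v => by simp [hxt0 v], ?_, by simpa using hY, by simpa using hZ⟩, ?_⟩
      · simp [hX]
      · simp [hM, hX0]
    · have hXpos : 0 < X := lt_of_le_of_ne hX (Ne.symm hX0)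
      set t : ℝ := M / (β * X) with ht
      have hβX : 0 < β * X := mul_pos hβ hXpos
      have ht0 : 0 ≤ t := div_nonneg hM0 hβX.le
      have ht1 : t ≤ 1 := (div_le_one hβX).mpr hMX
      refine ⟨fun v => (1 - t) * xt v, fun v => t * β * xt v, ⟨?_, ?_, ?_, ?_, ?_, ?_⟩, ?_⟩
      · intro v; exact mul_nonneg (by linarith) (hxt v)
      · intro v; exact mul_nonneg (mul_nonneg ht0 hβ.le) (hxt v)
      · intro v
        have : (1 - t) * xt v + 1 / β * (t * β * xt v) = xt v := by
          field_simp; ring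
        rw [this]
      · have : ∀ v, (1 - t) * xt v + γ * (t * β * xt v)
            = (1 - t + γ * t * β) * xt v := fun v => by ring
        rw [Finset.sum_congr rfl (fun v _ => this v), ← Finset.mul_sum, ← hXdef]
        nlinarith [mul_nonneg (mul_nonneg ht0 (by linarith : (0:ℝ) ≤ 1 - γ * β)) hX]
      · have : ∑ v, t * β * xt v = t * β * X := by
          rw [hXdef, Finset.mul_sum]
        rw [this]
        have : t * β * X = M := by rw [ht]; field_simp
        rw [this]; exact hMY
      · have h2 : ∑ v, γ * (t * β * xt v) = γ * (t * β * X) := by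
          simp only [hXdef, Finset.mul_sum, mul_assoc]
        rw [h2]
        have h1 : t * β * X = M := by
          rw [ht]; field_simp
        rw [h1]
        calc γ * M ≤ γ * (Z / γ) := by nlinarith
        _ = Z := by field_simp
      · have : ∀ v, (1 - t) * xt v + γ * (t * β * xt v)
            = (1 - t + γ * t * β) * xt v := fun v => by ring
        rw [Finset.sum_congr rfl (fun v _ => this v), ← Finset.mul_sum, ← hXdef]
        have h1 : t * β * X = M := by
          rw [ht]; field_simp
        have h2 : t * X = M / β := by
          rw [ht]; field_simp
        rw [show X - (1 - t + γ * t * β) * X = t * X - γ * (t * β * X) by ring,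
          h1, h2]
        field_simp
  · -- upper bound
    rintro s ⟨x, y, ⟨hx0, hy0, hcon, hsum, hsY, hsZ⟩, rfl⟩
    set S : ℝ := ∑ v, y v with hS
    have hS0 : 0 ≤ S := Finset.sum_nonneg fun v _ => hy0 v
    have hxlb : X - (1 / β) * S ≤ ∑ v, x v := by
      have : X ≤ ∑ v, (x v + (1 / β) * y v) :=
        Finset.sum_le_sum fun v _ => hcon v
      rw [Finset.sum_add_distrib, ← Finset.mul_sum] at this
      linarith
    have hx0' : (0:ℝ) ≤ ∑ v, x v := Finset.sum_nonneg fun v _ => hx0 v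
    have hobj : ∑ v, (x v + γ * y v) = (∑ v, x v) + γ * S := by
      rw [Finset.sum_add_distrib, ← Finset.mul_sum]
    have key1 : X - ∑ v, (x v + γ * y v) ≤ (1 / β - γ) * S := by
      rw [hobj]; nlinarith
    have key2 : X - ∑ v, (x v + γ * y v) ≤ X - γ * S := by
      rw [hobj]; linarith
    have hSZ : S ≤ Z / γ := by
      rw [← Finset.mul_sum] at hsZ
      exact (le_div_iff₀' hγ).mpr hsZ
    have goal3 : X - ∑ v, (x v + γ * y v) ≤ (1 / β - γ) * (β * X) := by
      rcases le_or_gt S (β * X) with h | h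
      · calc X - ∑ v, (x v + γ * y v) ≤ (1 / β - γ) * S := key1
          _ ≤ (1 / β - γ) * (β * X) := mul_le_mul_of_nonneg_left h hc
      · have hb : γ * (β * X) ≤ γ * S := mul_le_mul_of_nonneg_left h.le hγ.le
        have heq : (1 / β - γ) * (β * X) = X - γ * (β * X) := by
          field_simp
        rw [heq]; linarith
    have goal1 : X - ∑ v, (x v + γ * y v) ≤ (1 / β - γ) * Y := by
      calc X - ∑ v, (x v + γ * y v) ≤ (1 / β - γ) * S := key1
        _ ≤ (1 / β - γ) * Y := mul_le_mul_of_nonneg_left hsY hc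
    have goal2 : X - ∑ v, (x v + γ * y v) ≤ (1 / β - γ) * (Z / γ) := by
      calc X - ∑ v, (x v + γ * y v) ≤ (1 / β - γ) * S := key1
        _ ≤ (1 / β - γ) * (Z / γ) := mul_le_mul_of_nonneg_left hSZ hc
    rcases le_total Y (min (Z / γ) (β * X)) with h | h
    · rw [hMdef, min_eq_left h]; exact goal1
    · rw [hMdef, min_eq_right h]
      rcases le_total (Z / γ) (β * X) with h' | h'
      · rw [min_eq_left h']; exact goal2
      · rw [min_eq_right h']; exact goal3
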